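/- For every integer m ≥ 5, the Bernoulli number B_{4m+2} (which is positive) satisfies B_{4m+2}/(4m+2) > (1 + 1/(4m−10))^{8m+2} − 1. -/

import Mathlib

open Real Nat

lemma bern_lb (m : ℕ) :
    2 * ((4*m+2)! : ℝ) ≤ (2*π)^(4*m+2) * ((bernoulli (4*m+2) : ℚ) : ℝ) := by
  have hk : (2*m+1) ≠ 0 := by omega
  have h := hasSum_zeta_nat hk
  have h1 : (1 : ℝ) ≤ (-1 : ℝ) ^ ((2*m+1) + 1) * (2 : ℝ) ^ (2 * (2*m+1) - 1) *
      π ^ (2 * (2*m+1)) * (bernoulli (2 * (2*m+1)) : ℚ) / (2 * (2*m+1))! := by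
    have := le_hasSum h 1 (fun i _ => by positivity)
    simpa using this
  have hsign : (-1 : ℝ) ^ ((2*m+1) + 1) = 1 := by
    rw [show (2*m+1)+1 = 2*(m+1) by ring, pow_mul]; norm_num
  rw [hsign, one_mul] at h1
  have hfac : (0:ℝ) < ((2*(2*m+1))! : ℝ) := by positivity
  rw [le_div_iff₀ hfac, one_mul] at h1
  have hidx : 2 * (2*m+1) = 4*m+2 := by ring
  rw [hidx] at h1
  have h2 : (2:ℝ) ^ (4*m+2 - 1) = 2^(4*m+2) / 2 := by
    rw [show 4*m+2 - 1 = 4*m+1 by omega, pow_succ]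
    ring
  rw [h2] at h1
  calc 2 * ((4*m+2)! : ℝ) ≤ 2 * (2^(4*m+2) / 2 * π ^ (4*m+2) * (bernoulli (4*m+2) : ℚ)) := by
        linarith
    _ = (2*π)^(4*m+2) * ((bernoulli (4*m+2) : ℚ) : ℝ) := by
        rw [mul_pow]; ring

lemma pi_fact : (2*π)^4 < (1576:ℝ) := by
  have h : 2*π < 6.3 := by nlinarith [pi_lt_d2]
  have h0 : (0:ℝ) ≤ 2*π := by positivity
  calc (2*π)^4 < (6.3:ℝ)^4 := by
        apply pow_lt_pow_left₀ h h0; norm_num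
    _ < 1576 := by norm_num

lemma fac_lb : ∀ m : ℕ, 5 ≤ m →
    ((21)! : ℝ) * (2*π)^(4*m+2) ≤ ((4*m+1)! : ℝ) * (2*π)^22 := by
  intro m hm
  induction m with
  | zero => omega
  | succ n ih =>
    rcases Nat.lt_or_ge n 5 with h5 | h5
    · have hn : n = 4 := by omega
      subst hn
      norm_num
    · have ih' := ih h5
      have hp : (0:ℝ) < (2*π)^(4*n+2) := by positivity
      have hq : (0:ℝ) < (2*π)^22 := by positivity
      have key : ((2*π):ℝ)^4 ≤ ((4*n+2):ℝ) * (4*n+3) * (4*n+4) * (4*n+5) := by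
        have hn5 : (5:ℝ) ≤ (n:ℝ) := by exact_mod_cast h5
        calc ((2*π):ℝ)^4 ≤ 1576 := le_of_lt pi_fact
          _ ≤ (22:ℝ)*23*24*25 := by norm_num
          _ ≤ ((4*n+2):ℝ) * (4*n+3) * (4*n+4) * (4*n+5) := by
              gcongr <;> linarith
      have hfs : ((4*(n+1)+1)! : ℝ)
          = ((4*n+2):ℝ) * (4*n+3) * (4*n+4) * (4*n+5) * ((4*n+1)! : ℝ) := by
        have : 4*(n+1)+1 = (4*n+4)+1 := by ring
        rw [this]
        rw [show (4*n+4)+1 = ((4*n+1)+1+1+1)+1 by ring]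
        rw [Nat.factorial_succ, Nat.factorial_succ, Nat.factorial_succ, Nat.factorial_succ]
        push_cast
        ring
      have hes : ((2*π):ℝ)^(4*(n+1)+2) = (2*π)^(4*n+2) * (2*π)^4 := by
        rw [show 4*(n+1)+2 = (4*n+2)+4 by ring, pow_add]
      rw [hfs, hes]
      have hF : (0:ℝ) < ((4*n+1)! : ℝ) := by positivity
      calc ((21)! : ℝ) * ((2*π)^(4*n+2) * (2*π)^4)
          = ((21)! : ℝ) * (2*π)^(4*n+2) * (2*π)^4 := by ring
        _ ≤ ((4*n+1)! : ℝ) * (2*π)^22 * (2*π)^4 := by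
            apply mul_le_mul_of_nonneg_right ih' (by positivity)
        _ ≤ ((4*n+2):ℝ) * (4*n+3) * (4*n+4) * (4*n+5) * ((4*n+1)! : ℝ) * (2*π)^22 := by
            nlinarith [mul_pos hF hq]

lemma num_lb : (149:ℝ) * (2*π)^22 < 2 * ((21)! : ℝ) := by
  have h : 2*π < 6.3 := by nlinarith [pi_lt_d2]
  have h0 : (0:ℝ) ≤ 2*π := by positivity
  have h2 : ((2*π):ℝ)^22 < (6.3:ℝ)^22 := by
    apply pow_lt_pow_left₀ h h0; norm_num
  have h3 : (149:ℝ) * (6.3:ℝ)^22 < 2 * ((21)! : ℝ) := by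
    norm_num [Nat.factorial]
  have h4 := mul_lt_mul_of_pos_left h2 (by norm_num : (0:ℝ) < 149)
  exact h4.trans h3

/-- For every integer `m ≥ 5`, the Bernoulli number `B_{4m+2}` (which
is positive) satisfies `B_{4m+2}/(4m+2) > (1 + 1/(4m−10))^{8m+2} − 1`. -/
theorem bernoulli_obstruction_inequality (m : ℕ) (hm : 5 ≤ m) :
    0 < ((bernoulli (4 * m + 2) : ℚ) : ℝ) ∧
      ((bernoulli (4 * m + 2) : ℚ) : ℝ) / (4 * (m : ℝ) + 2) >
        (1 + 1 / (4 * (m : ℝ) - 10)) ^ (8 * m + 2) - 1 := by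
  have hB := bern_lb m
  set B := ((bernoulli (4*m+2) : ℚ) : ℝ) with hBdef
  have hp : (0:ℝ) < (2*π)^(4*m+2) := by positivity
  have hfpos : (0:ℝ) < ((4*m+2)! : ℝ) := by positivity
  have hBpos : 0 < B := by nlinarith
  refine ⟨hBpos, ?_⟩
  have hm5 : (5:ℝ) ≤ (m:ℝ) := by exact_mod_cast hm
  have hc : (0:ℝ) < 4*(m:ℝ)+2 := by positivity
  have hq : (0:ℝ) < (2*π)^22 := by positivity
  have hF : (0:ℝ) < ((4*m+1)! : ℝ) := by positivity
  have hfs : ((4*m+2)! : ℝ) = (4*(m:ℝ)+2) * ((4*m+1)! : ℝ) := by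
    rw [show 4*m+2 = (4*m+1)+1 by ring, Nat.factorial_succ]; push_cast; ring
  have h1 : 149 * (2*π)^(4*m+2) ≤ 2 * ((4*m+1)! : ℝ) := by
    have hfl := fac_lb m hm
    have hnl := num_lb
    have e1 : 149 * (2*π)^(4*m+2) * (2*π)^22 ≤ 2 * ((4*m+1)! : ℝ) * (2*π)^22 := by
      nlinarith
    exact le_of_mul_le_mul_right e1 hq
  have hLHS : (149:ℝ) ≤ B / (4*(m:ℝ)+2) := by
    rw [le_div_iff₀ hc]
    have e2 : 149 * (4*(m:ℝ)+2) * (2*π)^(4*m+2) ≤ B * (2*π)^(4*m+2) := by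
      calc 149 * (4*(m:ℝ)+2) * (2*π)^(4*m+2)
          = (4*(m:ℝ)+2) * (149 * (2*π)^(4*m+2)) := by ring
        _ ≤ (4*(m:ℝ)+2) * (2 * ((4*m+1)!:ℝ)) := by
            exact mul_le_mul_of_nonneg_left h1 hc.le
        _ = 2 * ((4*m+2)! : ℝ) := by rw [hfs]; ring
        _ ≤ (2*π)^(4*m+2) * B := hB
        _ = B * (2*π)^(4*m+2) := by ring
    exact le_of_mul_le_mul_right e2 hp
  have hx0 : (0:ℝ) < 4*(m:ℝ) - 10 := by linarith
  set x : ℝ := 1/(4*(m:ℝ)-10) with hxdef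
  have hx : 0 ≤ x := by positivity
  have h2 : (1+x)^(8*m+2) ≤ Real.exp x ^ (8*m+2) := by
    apply pow_le_pow_left₀ (by positivity)
    linarith [Real.add_one_le_exp x]
  have h3 : Real.exp x ^ (8*m+2) = Real.exp (((8*m+2 : ℕ):ℝ) * x) :=
    (Real.exp_nat_mul x (8*m+2)).symm
  have h4 : ((8*m+2 : ℕ):ℝ) * x ≤ 5 := by
    have hcst : ((8*m+2:ℕ):ℝ) = 8*(m:ℝ)+2 := by push_cast; ring
    rw [hcst, hxdef, mul_one_div, div_le_iff₀ hx0]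
    linarith
  have h5 : Real.exp 5 < 148.5 := by
    calc Real.exp 5 = Real.exp 1 ^ 5 := by
          rw [← Real.exp_nat_mul]; norm_num
      _ < 2.7182818286^5 := by
          apply pow_lt_pow_left₀ Real.exp_one_lt_d9 (le_of_lt (Real.exp_pos 1))
          norm_num
      _ < 148.5 := by norm_num
  have h6 : (1+x)^(8*m+2) ≤ 148.5 := by
    calc (1+x)^(8*m+2) ≤ Real.exp x ^ (8*m+2) := h2
      _ = Real.exp (((8*m+2 : ℕ):ℝ) * x) := h3
      _ ≤ Real.exp 5 := Real.exp_le_exp.mpr h4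
      _ ≤ 148.5 := h5.le
  linarith
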